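/- If every finite loopless 5-edge-connected multigraph with minimum degree at least 6 admits a nowhere-zero 3-flow, then every finite loopless 5-edge-connected multigraph admits a nowhere-zero 3-flow. -/

import Mathlib

/-- A finite loopless multigraph: edges `E` with an endpoint map into unordered
pairs of vertices, no edge being a loop. -/
structure Multigraph (V E : Type) where
  ends : E → Sym2 V
  loopless : ∀ e, ¬ (ends e).IsDiag

namespace Multigraph

variable {V E : Type} [Fintype V] [Fintype E] [DecidableEq V]

/-- `D` is an orientation of the edges: it assigns to each edge a tail
(first component) and a head (second component) consistent with its endpoints. -/
def IsOrientation (G : Multigraph V E) (D : E → V × V) : Prop :=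
  ∀ e, s((D e).1, (D e).2) = G.ends e

/-- Out-degree of `v` under the orientation `D`. -/
def outDeg (D : E → V × V) (v : V) : ℕ :=
  (Finset.univ.filter fun e => (D e).1 = v).card

/-- In-degree of `v` under the orientation `D`. -/
def inDeg (D : E → V × V) (v : V) : ℕ :=
  (Finset.univ.filter fun e => (D e).2 = v).card

/-- A modulo 3-orientation: at every vertex, out-degree minus in-degree is
divisible by 3. -/
def IsMod3Orientation (G : Multigraph V E) (D : E → V × V) : Prop :=
  G.IsOrientation D ∧ ∀ v : V, ((outDeg D v : ℤ) - (inDeg D v : ℤ)) ≡ 0 [ZMOD 3]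

/-- A nowhere-zero 3-flow: an orientation `D` together with `f : E → {±1, ±2}`
satisfying Kirchhoff's law at every vertex. -/
def IsNowhereZero3Flow (G : Multigraph V E) (D : E → V × V) (f : E → ℤ) : Prop :=
  G.IsOrientation D ∧ (∀ e, f e = 1 ∨ f e = -1 ∨ f e = 2 ∨ f e = -2) ∧
    ∀ v : V, ∑ e ∈ Finset.univ.filter (fun e => (D e).1 = v), f e =
             ∑ e ∈ Finset.univ.filter (fun e => (D e).2 = v), f e

def HasNowhereZero3Flow (G : Multigraph V E) : Prop :=
  ∃ D f, G.IsNowhereZero3Flow D f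

/-- The edge-cut `∂(X)`: edges with exactly one end in `X`. -/
def cut (G : Multigraph V E) (X : Set V) : Set E :=
  {e | ∃ x ∈ X, ∃ y ∉ X, G.ends e = s(x, y)}

/-- Adjacency after deleting the edge set `S`. -/
def Adj (G : Multigraph V E) (S : Set E) (a b : V) : Prop :=
  ∃ e, e ∉ S ∧ G.ends e = s(a, b)

/-- `G - S` is connected. -/
def ConnectedWithout (G : Multigraph V E) (S : Set E) : Prop :=
  ∀ a b : V, Relation.ReflTransGen (G.Adj S) a b

/-- `G` is `k`-edge-connected: `G - S` is connected for every edge set `S`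
with `|S| < k`. -/
def EdgeConnected (G : Multigraph V E) (k : ℕ) : Prop :=
  ∀ S : Set E, S.ncard < k → G.ConnectedWithout S

/-- The degree of `v`: the number of edges incident with `v`. -/
def degree (G : Multigraph V E) (v : V) : ℕ :=
  (Finset.univ.filter fun e => v ∈ G.ends e).card

/-- `G` is `Z₃`-connected: every `Z₃`-boundary is realized by an orientation
and a nowhere-zero `Z₃`-valued function. -/
def Z3Connected (G : Multigraph V E) : Prop :=
  ∀ β : V → ZMod 3, (∑ v : V, β v) = 0 →
    ∃ (D : E → V × V) (f : E → ZMod 3), G.IsOrientation D ∧ (∀ e, f e ≠ 0) ∧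
      ∀ v : V, (∑ e ∈ Finset.univ.filter (fun e => (D e).1 = v), f e) -
               (∑ e ∈ Finset.univ.filter (fun e => (D e).2 = v), f e) = β v

end Multigraph

section Aux

variable {V E : Type}

private lemma sym2_map_inl_not_diag (z : Sym2 V) (hz : ¬ z.IsDiag) :
    ¬ (z.map (Sum.inl : V → V ⊕ V)).IsDiag := by
  induction z using Sym2.ind with
  | _ x y =>
    rw [Sym2.map_pair_eq, Sym2.mk_isDiag_iff]
    rw [Sym2.mk_isDiag_iff] at hz
    exact fun h => hz (Sum.inl_injective h)

/-- The augmented graph: add, for every vertex `v`, a new pendant vertex joined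
to `v` by six parallel edges. -/
private def aug (G : Multigraph V E) : Multigraph (V ⊕ V) (E ⊕ V × Fin 6) where
  ends := Sum.elim (fun e => (G.ends e).map Sum.inl)
    (fun p => s(Sum.inl p.1, Sum.inr p.1))
  loopless := by
    rintro (e | p)
    · exact sym2_map_inl_not_diag _ (G.loopless e)
    · rw [Sum.elim_inr, Sym2.mk_isDiag_iff]
      exact fun h => Sum.inl_ne_inr h

private lemma aug_ends_inl (G : Multigraph V E) (e : E) :
    (aug G).ends (Sum.inl e) = (G.ends e).map Sum.inl := rfl

private lemma aug_ends_inr (G : Multigraph V E) (p : V × Fin 6) :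
    (aug G).ends (Sum.inr p) = s(Sum.inl p.1, Sum.inr p.1) := rfl

end Aux

theorem statement4
    (h : ∀ (V E : Type) [Fintype V] [Fintype E] [DecidableEq V]
        (G : Multigraph V E), G.EdgeConnected 5 → (∀ v : V, 6 ≤ G.degree v) →
        G.HasNowhereZero3Flow) :
    ∀ (V E : Type) [Fintype V] [Fintype E] [DecidableEq V]
        (G : Multigraph V E), G.EdgeConnected 5 → G.HasNowhereZero3Flow := by
  intro V E _ _ _ G hG
  classical
  -- The augmented graph is 5-edge-connected.
  have hconn : (aug G).EdgeConnected 5 := by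
    intro S hS
    have hstar : ∀ v : V, (aug G).Adj S (Sum.inl v) (Sum.inr v) ∧
        (aug G).Adj S (Sum.inr v) (Sum.inl v) := by
      intro v
      have hex : ∃ i : Fin 6, Sum.inr (v, i) ∉ S := by
        by_contra hc
        push_neg at hc
        have hsub : (Set.range fun i : Fin 6 => (Sum.inr (v, i) : E ⊕ V × Fin 6)) ⊆ S := by
          rintro _ ⟨i, rfl⟩; exact hc i
        have hinj : Function.Injective fun i : Fin 6 => (Sum.inr (v, i) : E ⊕ V × Fin 6) := by
          intro i j hij; simpa using hij
        have h6 : (Set.range fun i : Fin 6 => (Sum.inr (v, i) : E ⊕ V × Fin 6)).ncard = 6 := by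
          rw [← Set.image_univ, Set.ncard_image_of_injective _ hinj, Set.ncard_univ]
          simp
        have hle := Set.ncard_le_ncard hsub (Set.toFinite S)
        omega
      obtain ⟨i, hi⟩ := hex
      exact ⟨⟨Sum.inr (v, i), hi, rfl⟩, ⟨Sum.inr (v, i), hi, Sym2.eq_swap⟩⟩
    have hS' : {e : E | Sum.inl e ∈ S}.ncard < 5 := by
      have h1 : (Sum.inl '' {e : E | Sum.inl e ∈ S} : Set (E ⊕ V × Fin 6)) ⊆ S := by
        rintro _ ⟨e, he, rfl⟩; exact he
      have h2 := Set.ncard_le_ncard h1 (Set.toFinite S)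
      rw [Set.ncard_image_of_injective _ Sum.inl_injective] at h2
      omega
    have hlift : ∀ x y : V,
        Relation.ReflTransGen ((aug G).Adj S) (Sum.inl x) (Sum.inl y) := by
      intro x y
      refine Relation.ReflTransGen.lift Sum.inl ?_ _ _ (hG _ hS' x y)
      rintro a b ⟨e, he, hends⟩
      refine ⟨Sum.inl e, he, ?_⟩
      rw [aug_ends_inl, hends, Sym2.map_pair_eq]
    rintro (a | a) (b | b)
    · exact hlift a b
    · exact (hlift a b).tail (hstar b).1
    · exact Relation.ReflTransGen.head (hstar a).2 (hlift a b)
    · exact Relation.ReflTransGen.head (hstar a).2 ((hlift a b).tail (hstar b).1)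
  -- The augmented graph has minimum degree at least 6.
  have hdeg : ∀ w : V ⊕ V, 6 ≤ (aug G).degree w := by
    intro w
    have key : ∀ v : V, ∀ w : V ⊕ V, (w = Sum.inl v ∨ w = Sum.inr v) →
        6 ≤ (aug G).degree w := by
      intro v w hw
      have hinj : Function.Injective fun i : Fin 6 => (Sum.inr (v, i) : E ⊕ V × Fin 6) := by
        intro i j hij; simpa using hij
      have hsub : (Finset.univ.image fun i : Fin 6 => (Sum.inr (v, i) : E ⊕ V × Fin 6)) ⊆
          Finset.univ.filter (fun e' => w ∈ (aug G).ends e') := by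
        intro x hx
        simp only [Finset.mem_image, Finset.mem_univ, true_and] at hx
        obtain ⟨i, rfl⟩ := hx
        simp only [Finset.mem_filter, Finset.mem_univ, true_and, aug_ends_inr,
          Sym2.mem_iff]
        rcases hw with rfl | rfl
        · exact Or.inl rfl
        · exact Or.inr rfl
      have hcard : (Finset.univ.image fun i : Fin 6 =>
          (Sum.inr (v, i) : E ⊕ V × Fin 6)).card = 6 := by
        rw [Finset.card_image_of_injective _ hinj, Finset.card_univ]
        simp
      calc 6 = _ := hcard.symm
        _ ≤ _ := Finset.card_le_card hsub
    rcases w with v | v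
    · exact key v _ (Or.inl rfl)
    · exact key v _ (Or.inr rfl)
  obtain ⟨D', f', hOr, hVal, hK⟩ := h (V ⊕ V) (E ⊕ V × Fin 6) (aug G) hconn hdeg
  -- Structure of the orientation on original and star edges.
  have hpair : ∀ z : Sym2 V, ∃ x y, z = s(x, y) := Sym2.ind fun x y => ⟨x, y, rfl⟩
  have hp : ∀ e : E, ∃ x y : V,
      D' (Sum.inl e) = (Sum.inl x, Sum.inl y) ∧ G.ends e = s(x, y) := by
    intro e
    obtain ⟨x, y, hxy⟩ := hpair (G.ends e)
    have h1 := hOr (Sum.inl e)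
    rw [aug_ends_inl, hxy, Sym2.map_pair_eq, Sym2.eq_iff] at h1
    rcases h1 with ⟨h1, h2⟩ | ⟨h1, h2⟩
    · exact ⟨x, y, Prod.ext h1 h2, hxy⟩
    · exact ⟨y, x, Prod.ext h1 h2, by rw [hxy, Sym2.eq_swap]⟩
  have hq : ∀ s : V × Fin 6, D' (Sum.inr s) = (Sum.inl s.1, Sum.inr s.1) ∨
      D' (Sum.inr s) = (Sum.inr s.1, Sum.inl s.1) := by
    intro s
    have h1 := hOr (Sum.inr s)
    rw [aug_ends_inr, Sym2.eq_iff] at h1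
    rcases h1 with ⟨h1, h2⟩ | ⟨h1, h2⟩
    · exact Or.inl (Prod.ext h1 h2)
    · exact Or.inr (Prod.ext h1 h2)
  refine ⟨fun e => (Sum.elim id id (D' (Sum.inl e)).1, Sum.elim id id (D' (Sum.inl e)).2),
    fun e => f' (Sum.inl e), ?_, fun e => hVal (Sum.inl e), ?_⟩
  · -- orientation
    intro e
    obtain ⟨x, y, hD, hends⟩ := hp e
    simp [hD, hends]
  · -- Kirchhoff's law
    intro v
    have E1 := hK (Sum.inl v)
    have E2 := hK (Sum.inr v)
    rw [Finset.sum_filter, Finset.sum_filter, Fintype.sum_sum_type,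
      Fintype.sum_sum_type] at E1 E2
    -- original edges never point at pendant vertices
    have hz1 : (∑ e : E, if (D' (Sum.inl e)).1 = Sum.inr v
        then f' (Sum.inl e) else 0) = 0 := by
      refine Finset.sum_eq_zero fun e _ => ?_
      obtain ⟨x, y, hD, -⟩ := hp e
      rw [hD]; simp
    have hz2 : (∑ e : E, if (D' (Sum.inl e)).2 = Sum.inr v
        then f' (Sum.inl e) else 0) = 0 := by
      refine Finset.sum_eq_zero fun e _ => ?_
      obtain ⟨x, y, hD, -⟩ := hp e
      rw [hD]; simp
    rw [hz1, hz2, zero_add, zero_add] at E2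
    -- star edges pairing
    have ha : (∑ s : V × Fin 6, if (D' (Sum.inr s)).1 = Sum.inl v
        then f' (Sum.inr s) else 0) =
        ∑ s : V × Fin 6, if (D' (Sum.inr s)).2 = Sum.inr v
        then f' (Sum.inr s) else 0 := by
      refine Finset.sum_congr rfl fun s _ => ?_
      rcases hq s with hD | hD <;> rw [hD] <;> simp
    have hb : (∑ s : V × Fin 6, if (D' (Sum.inr s)).1 = Sum.inr v
        then f' (Sum.inr s) else 0) =
        ∑ s : V × Fin 6, if (D' (Sum.inr s)).2 = Sum.inl v
        then f' (Sum.inr s) else 0 := by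
      refine Finset.sum_congr rfl fun s _ => ?_
      rcases hq s with hD | hD <;> rw [hD] <;> simp
    -- convert the goal
    rw [Finset.sum_filter, Finset.sum_filter]
    have hgoal1 : (∑ e : E, if Sum.elim id id (D' (Sum.inl e)).1 = v
        then f' (Sum.inl e) else 0) =
        ∑ e : E, if (D' (Sum.inl e)).1 = Sum.inl v then f' (Sum.inl e) else 0 := by
      refine Finset.sum_congr rfl fun e _ => ?_
      obtain ⟨x, y, hD, -⟩ := hp e
      rw [hD]; simp; congr
    have hgoal2 : (∑ e : E, if Sum.elim id id (D' (Sum.inl e)).2 = v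
        then f' (Sum.inl e) else 0) =
        ∑ e : E, if (D' (Sum.inl e)).2 = Sum.inl v then f' (Sum.inl e) else 0 := by
      refine Finset.sum_congr rfl fun e _ => ?_
      obtain ⟨x, y, hD, -⟩ := hp e
      rw [hD]; simp; congr
    rw [hgoal1, hgoal2]
    linarith [E1, E2, ha, hb]
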